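/- Let (E₁,ℰ₁), (E₂,ℰ₂) be measurable spaces, π_{-} a probability measure on E₁, K a Markov kernel from E₁ to E₂, and π := π_{-} ⊗ K the induced measure on E₁ × E₂ (i.e. π(d(x,y)) = π_{-}(dx) K(x,dy)). Suppose the random probability measures ε^N on E₁ satisfy E[|ε^N(ψ) − π_{-}(ψ)|^p]^{1/p} ≤ C‖ψ‖/√N for all bounded measurable ψ, and conditionally on ε^N being the empirical measure of points X¹,…,X^N, draw Yⁿ ∼ K(Xⁿ,·) independently and set π^N := N^{-1} ∑_n δ_{(Xⁿ,Yⁿ)}. Then there is a constant C' with E[|π^N(φ) − π(φ)|^p]^{1/p} ≤ C'‖φ‖/√N for all N > 0 and all bounded measurable φ on E₁ × E₂. -/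

import Mathlib

open MeasureTheory ProbabilityTheory
open scoped ENNReal

section Aux

/-- helper: convert `eLpNorm` to the explicit `(∫ |f|^q)^(1/q)` form. -/
lemma rpow_helper {Ω : Type*} [MeasurableSpace Ω] (P : Measure Ω) (f : Ω → ℝ) {q : ℝ}
    (hq : 1 ≤ q) (hf : MemLp f (ENNReal.ofReal q) P) :
    (eLpNorm f (ENNReal.ofReal q) P).toReal = (∫ ω, |f ω| ^ q ∂P) ^ (1/q) := by
  have hq0 : (0:ℝ) < q := lt_of_lt_of_le one_pos hq
  rw [hf.eLpNorm_eq_integral_rpow_norm (by simp [ENNReal.ofReal_eq_zero]; linarith)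
    ENNReal.ofReal_ne_top]
  simp only [ENNReal.toReal_ofReal hq0.le]
  rw [ENNReal.toReal_ofReal
    (Real.rpow_nonneg (integral_nonneg fun ω => Real.rpow_nonneg (norm_nonneg _) _) _)]
  simp_rw [Real.norm_eq_abs, one_div]

end Aux
theorem measurable_piMeas {E₁ E₂ : Type*} [MeasurableSpace E₁] [MeasurableSpace E₂]
    (κ : Kernel E₁ E₂) [IsMarkovKernel κ] (N : ℕ) :
    Measurable (fun x : Fin N → E₁ => Measure.pi fun n => κ (x n)) := by
  rw [Measure.measurable_measure]
  intro s hs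
  refine MeasurableSpace.induction_on_inter
    (C := fun s _ => Measurable fun b : Fin N → E₁ => (Measure.pi fun n => κ (b n)) s)
    generateFrom_pi.symm isPiSystem_pi ?_ ?_ ?_ ?_ s hs
  · simp
  · rintro t ⟨t, ht, rfl⟩
    simp_rw [Measure.pi_pi]
    exact Finset.measurable_prod _ fun n _ =>
      (Kernel.measurable_coe κ (ht n (Set.mem_univ n))).comp (measurable_pi_apply n)
  · intro t htm ih
    have : ∀ x : Fin N → E₁, (Measure.pi fun n => κ (x n)) tᶜ
        = 1 - (Measure.pi fun n => κ (x n)) t := by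
      intro x
      rw [measure_compl htm (measure_ne_top _ _)]
      simp
    simp_rw [this]
    exact Measurable.const_sub ih 1
  · intro g hd hgm ih
    simp_rw [measure_iUnion hd hgm]
    exact Measurable.ennreal_tsum ih

noncomputable def piKernel {E₁ E₂ : Type*} [MeasurableSpace E₁] [MeasurableSpace E₂]
    (κ : Kernel E₁ E₂) [IsMarkovKernel κ] (N : ℕ) : Kernel (Fin N → E₁) (Fin N → E₂) :=
  ⟨fun x => Measure.pi fun n => κ (x n), measurable_piMeas κ N⟩

lemma piKernel_apply {E₁ E₂ : Type*} [MeasurableSpace E₁] [MeasurableSpace E₂]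
    (κ : Kernel E₁ E₂) [IsMarkovKernel κ] (N : ℕ) (x : Fin N → E₁) :
    piKernel κ N x = Measure.pi fun n => κ (x n) := rfl

instance {E₁ E₂ : Type*} [MeasurableSpace E₁] [MeasurableSpace E₂]
    (κ : Kernel E₁ E₂) [IsMarkovKernel κ] (N : ℕ) : IsMarkovKernel (piKernel κ N) :=
  ⟨fun x => by rw [piKernel_apply]; infer_instance⟩

theorem integral_pi_prod {E₂ : Type*} [MeasurableSpace E₂] {N : ℕ}
    (μ : Fin N → Measure E₂) [∀ n, IsProbabilityMeasure (μ n)] (f : Fin N → E₂ → ℝ) :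
    ∫ y : Fin N → E₂, ∏ n, f n (y n) ∂(Measure.pi μ) = ∏ n, ∫ u, f n u ∂(μ n) :=
  MeasureTheory.integral_fin_nat_prod_eq_prod (μ := μ) f

theorem integrable_pi_prod {E₂ : Type*} [MeasurableSpace E₂] {N : ℕ}
    (μ : Fin N → Measure E₂) [∀ n, IsProbabilityMeasure (μ n)] (f : Fin N → E₂ → ℝ)
    (hf : ∀ n, Integrable (f n) (μ n)) :
    Integrable (fun y : Fin N → E₂ => ∏ n, f n (y n)) (Measure.pi μ) :=
  MeasureTheory.Integrable.fin_nat_prod (μ := μ) hf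
theorem count_good (k N : ℕ) (hk : 1 ≤ k) :
    ((Finset.univ.filter
      (fun f : Fin (2*k) → Fin N => ∀ i, ∃ j, j ≠ i ∧ f j = f i)).card : ℕ)
      ≤ k^(2*k) * N^k := by
  classical
  have h2k : 0 < 2*k := by omega
  set S := Finset.univ.filter
      (fun f : Fin (2*k) → Fin N => ∀ i, ∃ j, j ≠ i ∧ f j = f i) with hS
  have hsub : S ⊆ Finset.image
      (fun gh : (Fin (2*k) → Fin k) × (Fin k → Fin N) => gh.2 ∘ gh.1) Finset.univ := by
    intro f hf
    have hgood : ∀ i, ∃ j, j ≠ i ∧ f j = f i := (Finset.mem_filter.1 hf).2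
    -- image cardinality bound
    have hcard : (Finset.image f Finset.univ).card ≤ k := by
      have hfib : ∀ a ∈ Finset.image f Finset.univ,
          2 ≤ (Finset.univ.filter (fun i => f i = a)).card := by
        intro a ha
        obtain ⟨i, _, rfl⟩ := Finset.mem_image.1 ha
        obtain ⟨j, hji, hj⟩ := hgood i
        rw [Nat.succ_le_iff, Finset.one_lt_card]
        exact ⟨j, Finset.mem_filter.2 ⟨Finset.mem_univ _, hj⟩,
          i, Finset.mem_filter.2 ⟨Finset.mem_univ _, rfl⟩, fun h => hji h⟩
      have hsum : (Finset.univ : Finset (Fin (2*k))).card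
          = ∑ a ∈ Finset.image f Finset.univ,
              (Finset.univ.filter (fun i => f i = a)).card :=
        Finset.card_eq_sum_card_fiberwise
          (fun i _ => Finset.mem_image_of_mem f (Finset.mem_univ i))
      have h1 : 2 * (Finset.image f Finset.univ).card ≤ 2 * k := by
        calc 2 * (Finset.image f Finset.univ).card
            = ∑ _a ∈ Finset.image f Finset.univ, 2 := by
              rw [Finset.sum_const]; ring
          _ ≤ ∑ a ∈ Finset.image f Finset.univ,
                (Finset.univ.filter (fun i => f i = a)).card := Finset.sum_le_sum hfib
          _ = 2 * k := by rw [← hsum, Finset.card_univ, Fintype.card_fin]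
      omega
    set I := Finset.image f Finset.univ with hI
    set e := I.orderIsoOfFin rfl with he
    refine Finset.mem_image.2 ⟨(fun i =>
        (⟨(e.symm ⟨f i, Finset.mem_image_of_mem f (Finset.mem_univ i)⟩ : Fin I.card),
          lt_of_lt_of_le (Fin.is_lt _) hcard⟩ : Fin k),
      fun j => if hj : (j : ℕ) < I.card then (e ⟨j, hj⟩ : Fin N) else f ⟨0, h2k⟩),
      Finset.mem_univ _, ?_⟩
    funext i
    show (if hj : _ < I.card then (e ⟨_, hj⟩ : Fin N) else f ⟨0, h2k⟩) = f i
    rw [dif_pos (Fin.is_lt (e.symm ⟨f i, Finset.mem_image_of_mem f (Finset.mem_univ i)⟩))]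
    show (e (e.symm ⟨f i, _⟩) : Fin N) = f i
    rw [OrderIso.apply_symm_apply]
  calc S.card ≤ _ := Finset.card_le_card hsub
    _ ≤ (Finset.univ : Finset ((Fin (2*k) → Fin k) × (Fin k → Fin N))).card :=
        Finset.card_image_le
    _ = k^(2*k) * N^k := by
        simp [Finset.card_univ, Fintype.card_fun]
theorem mz_bound {E₂ : Type*} [MeasurableSpace E₂] {N k : ℕ} (hk : 1 ≤ k)
    (μ : Fin N → Measure E₂) [∀ n, IsProbabilityMeasure (μ n)]
    (Z : Fin N → E₂ → ℝ) (hZm : ∀ n, Measurable (Z n))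
    (B : ℝ) (hB0 : 0 ≤ B) (hB : ∀ n u, |Z n u| ≤ B)
    (hmean : ∀ n, ∫ u, Z n u ∂(μ n) = 0) :
    ∫ y : Fin N → E₂, (∑ n, Z n (y n)) ^ (2*k) ∂(Measure.pi μ)
      ≤ (k:ℝ)^(2*k) * (N:ℝ)^k * B^(2*k) := by
  classical
  set c : (Fin (2*k) → Fin N) → Fin N → ℕ :=
    fun f n => (Finset.univ.filter (fun i => f i = n)).card with hc
  -- integrability of each product
  have hint : ∀ f : Fin (2*k) → Fin N,
      Integrable (fun y : Fin N → E₂ => ∏ n, (Z n (y n)) ^ (c f n)) (Measure.pi μ) := by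
    intro f
    refine integrable_pi_prod μ (fun n u => (Z n u) ^ (c f n)) (fun n => ?_)
    refine (integrable_const (B ^ (c f n))).mono' ((hZm n).pow_const _).aestronglyMeasurable ?_
    filter_upwards with u
    rw [Real.norm_eq_abs, abs_pow]
    exact pow_le_pow_left₀ (abs_nonneg _) (hB n u) _
  -- pointwise expansion
  have hexp : ∀ y : Fin N → E₂, (∑ n, Z n (y n)) ^ (2*k)
      = ∑ f : Fin (2*k) → Fin N, ∏ n, (Z n (y n)) ^ (c f n) := by
    intro y
    rw [Fintype.sum_pow]
    refine Finset.sum_congr rfl (fun f _ => ?_)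
    rw [← Finset.prod_fiberwise Finset.univ f (fun i => Z (f i) (y (f i)))]
    refine Finset.prod_congr rfl (fun n _ => ?_)
    have : ∏ i ∈ Finset.univ.filter (fun i => f i = n), Z (f i) (y (f i))
        = ∏ _i ∈ Finset.univ.filter (fun i => f i = n), Z n (y n) :=
      Finset.prod_congr rfl (fun i hi => by rw [(Finset.mem_filter.1 hi).2])
    rw [this, Finset.prod_const]
  -- value of each integral
  have hval : ∫ y : Fin N → E₂, (∑ n, Z n (y n)) ^ (2*k) ∂(Measure.pi μ)
      = ∑ f : Fin (2*k) → Fin N, ∏ n, ∫ u, (Z n u) ^ (c f n) ∂(μ n) := by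
    simp_rw [hexp]
    rw [integral_finset_sum _ (fun f _ => hint f)]
    exact Finset.sum_congr rfl (fun f _ => integral_pi_prod μ (fun n u => Z n u ^ c f n))
  rw [hval]
  set Good := Finset.univ.filter
      (fun f : Fin (2*k) → Fin N => ∀ i, ∃ j, j ≠ i ∧ f j = f i) with hGood
  have hzero : ∀ f : Fin (2*k) → Fin N, f ∉ Good →
      ∏ n, ∫ u, (Z n u) ^ (c f n) ∂(μ n) = 0 := by
    intro f hf
    rw [hGood, Finset.mem_filter, not_and] at hf
    push_neg at hf
    obtain ⟨i, hi⟩ := hf (Finset.mem_univ f)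
    have hone : c f (f i) = 1 := by
      rw [hc]
      rw [Finset.card_eq_one]
      refine ⟨i, ?_⟩
      ext j
      simp only [Finset.mem_filter, Finset.mem_univ, true_and, Finset.mem_singleton]
      constructor
      · intro hj
        by_contra hne
        exact (hi j hne) hj
      · rintro rfl; rfl
    refine Finset.prod_eq_zero (Finset.mem_univ (f i)) ?_
    rw [hone]
    simpa using hmean (f i)
  have habs : ∀ f ∈ Good, |∏ n, ∫ u, (Z n u) ^ (c f n) ∂(μ n)| ≤ B^(2*k) := by
    intro f _
    have hsum : ∑ n, c f n = 2*k := by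
      rw [hc]
      have := Finset.card_eq_sum_card_fiberwise
        (fun (i : Fin (2*k)) (_ : i ∈ Finset.univ) => Finset.mem_univ (f i))
      rw [Finset.card_univ, Fintype.card_fin] at this
      exact this.symm
    calc |∏ n, ∫ u, (Z n u) ^ (c f n) ∂(μ n)|
        = ∏ n, |∫ u, (Z n u) ^ (c f n) ∂(μ n)| := by rw [Finset.abs_prod]
      _ ≤ ∏ n, B ^ (c f n) := by
          refine Finset.prod_le_prod (fun n _ => abs_nonneg _) (fun n _ => ?_)
          have := norm_integral_le_of_norm_le_const (C := B ^ (c f n)) (μ := μ n)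
            (f := fun u => (Z n u) ^ (c f n)) ?_
          · simpa [Real.norm_eq_abs] using this
          · filter_upwards with u
            rw [Real.norm_eq_abs, abs_pow]
            exact pow_le_pow_left₀ (abs_nonneg _) (hB n u) _
      _ = B ^ (2*k) := by rw [Finset.prod_pow_eq_pow_sum]; rw [hsum]
  calc ∑ f : Fin (2*k) → Fin N, ∏ n, ∫ u, (Z n u) ^ (c f n) ∂(μ n)
      = ∑ f ∈ Good, ∏ n, ∫ u, (Z n u) ^ (c f n) ∂(μ n) :=
        (Finset.sum_subset (Finset.subset_univ Good)
          (fun f _ hf => hzero f hf)).symm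
    _ ≤ ∑ f ∈ Good, B ^ (2*k) :=
        Finset.sum_le_sum (fun f hf => (abs_le.1 (habs f hf)).2)
    _ = (Good.card : ℝ) * B ^ (2*k) := by rw [Finset.sum_const, nsmul_eq_mul]
    _ ≤ ((k^(2*k) * N^k : ℕ) : ℝ) * B ^ (2*k) := by
        apply mul_le_mul_of_nonneg_right _ (pow_nonneg hB0 _)
        exact_mod_cast count_good k N hk
    _ = (k:ℝ)^(2*k) * (N:ℝ)^k * B^(2*k) := by push_cast; ring

theorem law_eq {Ω E₁ E₂ : Type*} [mΩ : MeasurableSpace Ω] [MeasurableSpace E₁]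
    [MeasurableSpace E₂] (P : Measure Ω) [IsProbabilityMeasure P]
    (𝒢f : ℕ → MeasurableSpace Ω) {N : ℕ} (h𝒢 : 𝒢f N ≤ mΩ)
    (κ : Kernel E₁ E₂) [IsMarkovKernel κ]
    (T : Ω → Fin N → E₁) (U : Ω → Fin N → E₂)
    (hT : Measurable[𝒢f N] T) (hU : Measurable U)
    (hcond : ∀ f : (Fin N → E₂) → ℝ, Measurable f → (∃ M, ∀ y, |f y| ≤ M) →
      (P[(fun ω => f (U ω))|𝒢f N]) =ᵐ[P]
        fun ω => ∫ y, f y ∂(Measure.pi fun n => κ (T ω n))) :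
    P.map (fun ω => (T ω, U ω)) = (P.map T).compProd (piKernel κ N) := by
  have hTm : Measurable T := hT.mono h𝒢 le_rfl
  haveI : IsProbabilityMeasure (P.map T) := Measure.isProbabilityMeasure_map hTm.aemeasurable
  have hTU : Measurable (fun ω => (T ω, U ω)) := hTm.prodMk hU
  haveI : IsProbabilityMeasure (P.map (fun ω => (T ω, U ω))) :=
    Measure.isProbabilityMeasure_map hTU.aemeasurable
  haveI : IsFiniteMeasure (P.trim h𝒢) := isFiniteMeasure_trim h𝒢
  refine ext_of_generate_finite _ generateFrom_prod.symm isPiSystem_prod ?_ (by simp)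
  rintro A ⟨s, hs, t, ht, rfl⟩
  simp only [Set.mem_setOf_eq] at hs ht
  -- LHS
  rw [Measure.map_apply hTU (hs.prod ht), Set.mk_preimage_prod,
    Measure.compProd_apply_prod hs ht,
    MeasureTheory.setLIntegral_map hs (Kernel.measurable_coe (piKernel κ N) ht) hTm]
  simp_rw [piKernel_apply]
  -- now : P (T⁻¹ s ∩ U⁻¹ t) = ∫⁻ ω in T⁻¹ s, (pi fun n => κ (T ω n)) t ∂P
  set G : Ω → ℝ≥0∞ := fun ω => (Measure.pi fun n => κ (T ω n)) t with hG
  have hGm : Measurable G := ((Measure.measurable_coe ht).comp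
    ((measurable_piMeas κ N).comp hTm))
  have hG1 : ∀ ω, G ω ≤ 1 := fun ω => prob_le_one
  -- conditional expectation input
  set f : (Fin N → E₂) → ℝ := t.indicator (fun _ => (1:ℝ)) with hf
  have hfm : Measurable f := measurable_const.indicator ht
  have hfb : ∀ y, |f y| ≤ 1 := by
    intro y
    rw [hf]
    by_cases hy : y ∈ t <;> simp [Set.indicator_apply, hy]
  have hcf := hcond f hfm ⟨1, hfb⟩
  have hfi : Integrable (fun ω => f (U ω)) P :=
    (integrable_const (1:ℝ)).mono' (hfm.comp hU).aestronglyMeasurable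
      (Filter.Eventually.of_forall fun ω => by rw [Real.norm_eq_abs]; exact hfb _)
  have hTs : MeasurableSet[𝒢f N] (T ⁻¹' s) := hT hs
  have hTs' : MeasurableSet (T ⁻¹' s) := h𝒢 _ hTs
  -- the real-valued chain
  have e2 : ∫ ω in T ⁻¹' s, (P[(fun ω => f (U ω))|𝒢f N]) ω ∂P
      = ∫ ω in T ⁻¹' s, f (U ω) ∂P := setIntegral_condExp h𝒢 hfi hTs
  have e1 : ∫ ω in T ⁻¹' s, f (U ω) ∂P = (P (U ⁻¹' t ∩ T ⁻¹' s)).toReal := by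
    have : (fun ω => f (U ω)) = (U ⁻¹' t).indicator (fun _ => (1:ℝ)) := by
      funext ω
      rw [hf]
      by_cases hy : U ω ∈ t <;> simp [Set.indicator_apply, hy]
    rw [this, integral_indicator_const (1:ℝ) (hU ht), measureReal_restrict_apply (hU ht)]
    simp [measureReal_def]
  have e3 : ∫ ω in T ⁻¹' s, (P[(fun ω => f (U ω))|𝒢f N]) ω ∂P
      = ∫ ω in T ⁻¹' s, (G ω).toReal ∂P := by
    refine setIntegral_congr_ae hTs' ?_
    filter_upwards [hcf] with ω hω _
    rw [hω, hf, integral_indicator_const (1:ℝ) ht]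
    simp [hG, measureReal_def]
  have e4 : ∫ ω in T ⁻¹' s, (G ω).toReal ∂P = (∫⁻ ω in T ⁻¹' s, G ω ∂P).toReal := by
    refine integral_toReal (hGm.aemeasurable.restrict) ?_
    filter_upwards with ω
    exact lt_of_le_of_lt (hG1 ω) ENNReal.one_lt_top
  have hreal : (P (T ⁻¹' s ∩ U ⁻¹' t)).toReal = (∫⁻ ω in T ⁻¹' s, G ω ∂P).toReal := by
    rw [Set.inter_comm, ← e1, ← e2, e3, e4]
  have hfin1 : P (T ⁻¹' s ∩ U ⁻¹' t) ≠ ⊤ := measure_ne_top _ _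
  have hfin2 : (∫⁻ ω in T ⁻¹' s, G ω ∂P) ≠ ⊤ := by
    have hle : (∫⁻ ω in T ⁻¹' s, G ω ∂P) ≤ 1 := by
      calc (∫⁻ ω in T ⁻¹' s, G ω ∂P) ≤ ∫⁻ _ω in T ⁻¹' s, 1 ∂P :=
            lintegral_mono fun ω => hG1 ω
        _ = P (T ⁻¹' s) := setLIntegral_one _
        _ ≤ 1 := prob_le_one
    exact ne_of_lt (lt_of_le_of_lt hle ENNReal.one_lt_top)
  exact (ENNReal.toReal_eq_toReal_iff' hfin1 hfin2).1 hreal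

/-- Mutation step preserves `L^p` inequalities: if the empirical measures `ε^N` of the resampled
particles `X` approximate `π₋` at `L^p` rate `C‖ψ‖/√N`, and conditionally each `Yⁿ` is drawn
independently from the Markov kernel `K(Xⁿ,·)`, then the empirical measures of the pairs
`(Xⁿ,Yⁿ)` approximate `π = π₋ ⊗ K` at the same `L^p` rate (with a new constant `C'`). -/
theorem stmt7
    {Ω : Type*} [mΩ : MeasurableSpace Ω] (P : Measure Ω) [IsProbabilityMeasure P]
    {E₁ E₂ : Type*} [MeasurableSpace E₁] [MeasurableSpace E₂]
    (πm : Measure E₁) [IsProbabilityMeasure πm]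
    (κ : Kernel E₁ E₂) [IsMarkovKernel κ]
    (X : (N : ℕ) → Fin N → Ω → E₁) (Y : (N : ℕ) → Fin N → Ω → E₂)
    (𝒢 : ℕ → MeasurableSpace Ω)
    (h𝒢 : ∀ N, 𝒢 N ≤ mΩ)
    (hXmeas : ∀ N n, Measurable[𝒢 N] (X N n))
    (hYmeas : ∀ N n, Measurable (Y N n))
    (hcond : ∀ N : ℕ, ∀ f : (Fin N → E₂) → ℝ, Measurable f → (∃ M, ∀ y, |f y| ≤ M) →
      (P[(fun ω => f (fun n => Y N n ω))|𝒢 N])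
        =ᵐ[P] fun ω => ∫ y, f y ∂(Measure.pi fun n : Fin N => κ (X N n ω)))
    (p C : ℝ) (hp : 1 ≤ p)
    (hLp : ∀ N : ℕ, 0 < N → ∀ ψ : E₁ → ℝ, Measurable ψ → ∀ M : ℝ, (∀ x, |ψ x| ≤ M) →
      (∫ ω, |(N : ℝ)⁻¹ * (∑ n : Fin N, ψ (X N n ω)) - ∫ x, ψ x ∂πm| ^ p ∂P) ^ (1 / p)
        ≤ C * M / Real.sqrt N) :
    ∃ C' : ℝ, ∀ N : ℕ, 0 < N → ∀ φ : E₁ × E₂ → ℝ, Measurable φ →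
      ∀ M : ℝ, (∀ x, |φ x| ≤ M) →
      (∫ ω, |(N : ℝ)⁻¹ * (∑ n : Fin N, φ (X N n ω, Y N n ω))
          - ∫ z, φ z ∂(πm.compProd κ)| ^ p ∂P) ^ (1 / p)
        ≤ C' * M / Real.sqrt N := by
  classical
  set k : ℕ := ⌈p⌉₊ with hkdef
  have hk : 1 ≤ k := by rw [hkdef]; exact Nat.one_le_ceil_iff.2 (by linarith)
  have hpk : p ≤ (2*k : ℕ) := by
    push_cast
    calc p ≤ (⌈p⌉₊ : ℝ) := Nat.le_ceil p
      _ ≤ 2*(k:ℝ) := by rw [hkdef]; push_cast; linarith [Nat.cast_nonneg (α := ℝ) ⌈p⌉₊]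
  have hp0 : (0:ℝ) < p := lt_of_lt_of_le one_pos hp
  have hq1 : (1:ℝ) ≤ ((2*k : ℕ) : ℝ) := by
    have : (1:ℝ) ≤ (k:ℝ) := by exact_mod_cast hk
    push_cast
    nlinarith
  refine ⟨C + 2*(k:ℝ), ?_⟩
  intro N hN φ hφ M hM
  have hNR : (0:ℝ) < (N:ℝ) := by exact_mod_cast hN
  -- M is nonnegative
  have hΩne : Nonempty Ω := by
    by_contra h
    rw [not_nonempty_iff] at h
    have h1 : (Set.univ : Set Ω) = ∅ := Set.univ_eq_empty_iff.2 h
    have h2 := measure_univ (μ := P)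
    rw [h1, measure_empty] at h2
    exact zero_ne_one h2
  obtain ⟨ω₀⟩ := hΩne
  have hM0 : 0 ≤ M := le_trans (abs_nonneg _) (hM (X N ⟨0, hN⟩ ω₀, Y N ⟨0, hN⟩ ω₀))
  -- the conditional mean function ψ
  set ψ : E₁ → ℝ := fun x => ∫ u, φ (x, u) ∂(κ x) with hψdef
  have hψm : Measurable ψ :=
    (MeasureTheory.StronglyMeasurable.integral_kernel_prod_right' (κ := κ)
      hφ.stronglyMeasurable).measurable
  have hψb : ∀ x, |ψ x| ≤ M := by
    intro x
    rw [← Real.norm_eq_abs]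
    calc ‖∫ u, φ (x, u) ∂(κ x)‖ ≤ M * ((κ x) Set.univ).toReal :=
          norm_integral_le_of_norm_le_const
            (Filter.Eventually.of_forall fun u => by rw [Real.norm_eq_abs]; exact hM _)
      _ = M := by simp
  have hφint : ∀ x, Integrable (fun u => φ (x, u)) (κ x) := by
    intro x
    refine (integrable_const M).mono'
      (hφ.comp measurable_prodMk_left).aestronglyMeasurable ?_
    filter_upwards with u
    rw [Real.norm_eq_abs]; exact hM _
  have hcompint : Integrable φ (πm.compProd κ) := by
    refine (integrable_const M).mono' hφ.aestronglyMeasurable ?_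
    filter_upwards with z
    rw [Real.norm_eq_abs]; exact hM _
  have hψeq : ∫ z, φ z ∂(πm.compProd κ) = ∫ x, ψ x ∂πm :=
    MeasureTheory.Measure.integral_compProd hcompint
  -- measurability of coordinates
  have hXm : ∀ n, Measurable (X N n) := fun n => (hXmeas N n).mono (h𝒢 N) le_rfl
  -- the two error terms
  set A : Ω → ℝ := fun ω => (N:ℝ)⁻¹ * ∑ n : Fin N, (φ (X N n ω, Y N n ω) - ψ (X N n ω))
    with hAdef
  set B : Ω → ℝ := fun ω => (N:ℝ)⁻¹ * (∑ n : Fin N, ψ (X N n ω)) - ∫ x, ψ x ∂πm with hBdef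
  have hAm : Measurable A := by
    refine (measurable_const.mul (Finset.measurable_sum Finset.univ fun n _ => ?_))
    exact (hφ.comp ((hXm n).prodMk (hYmeas N n))).sub (hψm.comp (hXm n))
  have hBm : Measurable B := by
    refine (measurable_const.mul (Finset.measurable_sum Finset.univ fun n _ =>
      hψm.comp (hXm n))).sub measurable_const
  -- uniform bounds
  have hsum_bound : ∀ (x : Fin N → E₁) (y : Fin N → E₂),
      |(N:ℝ)⁻¹ * ∑ n : Fin N, (φ (x n, y n) - ψ (x n))| ≤ 2*M := by
    intro x y
    have h1 : |∑ n : Fin N, (φ (x n, y n) - ψ (x n))| ≤ (N:ℝ) * (2*M) := by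
      calc |∑ n : Fin N, (φ (x n, y n) - ψ (x n))|
          ≤ ∑ n : Fin N, |φ (x n, y n) - ψ (x n)| := Finset.abs_sum_le_sum_abs _ _
        _ ≤ ∑ _n : Fin N, 2*M := Finset.sum_le_sum fun n _ =>
            (abs_sub _ _).trans (by linarith [hM (x n, y n), hψb (x n)])
        _ = (N:ℝ) * (2*M) := by
            rw [Finset.sum_const, Finset.card_univ, Fintype.card_fin, nsmul_eq_mul]
    calc |(N:ℝ)⁻¹ * ∑ n : Fin N, (φ (x n, y n) - ψ (x n))|
        = (N:ℝ)⁻¹ * |∑ n : Fin N, (φ (x n, y n) - ψ (x n))| := by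
          rw [abs_mul, abs_of_nonneg (inv_nonneg.2 hNR.le)]
      _ ≤ (N:ℝ)⁻¹ * ((N:ℝ) * (2*M)) := mul_le_mul_of_nonneg_left h1 (inv_nonneg.2 hNR.le)
      _ = 2*M := by field_simp
  have hAb : ∀ ω, |A ω| ≤ 2*M := fun ω =>
    hsum_bound (fun n => X N n ω) (fun n => Y N n ω)
  have hBb : ∀ ω, |B ω| ≤ 2*M := by
    intro ω
    have h1 : |(N:ℝ)⁻¹ * (∑ n : Fin N, ψ (X N n ω))| ≤ M := by
      have h2 : |∑ n : Fin N, ψ (X N n ω)| ≤ (N:ℝ) * M := by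
        calc |∑ n : Fin N, ψ (X N n ω)| ≤ ∑ n : Fin N, |ψ (X N n ω)| :=
              Finset.abs_sum_le_sum_abs _ _
          _ ≤ ∑ _n : Fin N, M := Finset.sum_le_sum fun n _ => hψb _
          _ = (N:ℝ) * M := by
              rw [Finset.sum_const, Finset.card_univ, Fintype.card_fin, nsmul_eq_mul]
      calc |(N:ℝ)⁻¹ * (∑ n : Fin N, ψ (X N n ω))|
          = (N:ℝ)⁻¹ * |∑ n : Fin N, ψ (X N n ω)| := by
            rw [abs_mul, abs_of_nonneg (inv_nonneg.2 hNR.le)]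
        _ ≤ (N:ℝ)⁻¹ * ((N:ℝ) * M) := mul_le_mul_of_nonneg_left h2 (inv_nonneg.2 hNR.le)
        _ = M := by field_simp
    have h3 : |∫ x, ψ x ∂πm| ≤ M := by
      rw [← Real.norm_eq_abs]
      calc ‖∫ x, ψ x ∂πm‖ ≤ M * (πm Set.univ).toReal :=
            norm_integral_le_of_norm_le_const
              (Filter.Eventually.of_forall fun x => by rw [Real.norm_eq_abs]; exact hψb _)
        _ = M := by simp
    calc |B ω| ≤ |(N:ℝ)⁻¹ * (∑ n : Fin N, ψ (X N n ω))| + |∫ x, ψ x ∂πm| := abs_sub _ _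
      _ ≤ 2*M := by linarith
  -- decomposition of the target function
  have hAB : ∀ ω, (N : ℝ)⁻¹ * (∑ n : Fin N, φ (X N n ω, Y N n ω))
      - ∫ z, φ z ∂(πm.compProd κ) = A ω + B ω := by
    intro ω
    rw [hψeq, hAdef, hBdef]
    simp only
    rw [Finset.sum_sub_distrib]
    ring
  -- MemLp facts
  set ep : ℝ≥0∞ := ENNReal.ofReal p with hepdef
  set eq2 : ℝ≥0∞ := ENNReal.ofReal ((2*k : ℕ) : ℝ) with heq2def
  have hep1 : (1:ℝ≥0∞) ≤ ep := by rw [hepdef]; exact ENNReal.one_le_ofReal.2 hp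
  have hepq : ep ≤ eq2 := by
    rw [hepdef, heq2def]; exact ENNReal.ofReal_le_ofReal hpk
  have hAtop : MemLp A ⊤ P :=
    memLp_top_of_bound hAm.aestronglyMeasurable (2*M)
      (Filter.Eventually.of_forall fun ω => by rw [Real.norm_eq_abs]; exact hAb ω)
  have hBtop : MemLp B ⊤ P :=
    memLp_top_of_bound hBm.aestronglyMeasurable (2*M)
      (Filter.Eventually.of_forall fun ω => by rw [Real.norm_eq_abs]; exact hBb ω)
  have hAep : MemLp A ep P := hAtop.mono_exponent le_top
  have hBep : MemLp B ep P := hBtop.mono_exponent le_top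
  have hA2k : MemLp A eq2 P := hAtop.mono_exponent le_top
  have hABep : MemLp (fun ω => A ω + B ω) ep P := hAep.add hBep
  -- the key moment bound for A
  have hkey : ∫ ω, (A ω) ^ (2*k) ∂P ≤ ((2*(k:ℝ)*M)/Real.sqrt N) ^ (2*k) := by
    set T : Ω → Fin N → E₁ := fun ω n => X N n ω with hTdef
    set U : Ω → Fin N → E₂ := fun ω n => Y N n ω with hUdef
    have hTmG : Measurable[𝒢 N] T := by
      rw [hTdef]
      exact @measurable_pi_lambda Ω (Fin N) (fun _ => E₁) (𝒢 N) _ _ (fun n => hXmeas N n)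
    have hTm : Measurable T := hTmG.mono (h𝒢 N) le_rfl
    have hUm : Measurable U := measurable_pi_lambda _ (fun n => hYmeas N n)
    have hlaw : P.map (fun ω => (T ω, U ω)) = (P.map T).compProd (piKernel κ N) :=
      law_eq P 𝒢 (h𝒢 N) κ T U hTmG hUm (hcond N)
    haveI : IsProbabilityMeasure (P.map T) := Measure.isProbabilityMeasure_map hTm.aemeasurable
    set G2 : (Fin N → E₁) × (Fin N → E₂) → ℝ :=
      fun q => ((N:ℝ)⁻¹ * ∑ n : Fin N, (φ (q.1 n, q.2 n) - ψ (q.1 n))) ^ (2*k) with hG2def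
    have hG2m : Measurable G2 := by
      refine Measurable.pow_const ?_ _
      refine measurable_const.mul (Finset.measurable_sum Finset.univ fun n _ => ?_)
      exact (hφ.comp ((measurable_fst.eval).prodMk (measurable_snd.eval))).sub
        (hψm.comp (measurable_fst.eval))
    have hG2b : ∀ q, |G2 q| ≤ (2*M)^(2*k) := by
      intro q
      rw [hG2def]
      simp only
      rw [abs_pow]
      exact pow_le_pow_left₀ (abs_nonneg _) (hsum_bound q.1 q.2) _
    have hG2int : Integrable G2 ((P.map T).compProd (piKernel κ N)) := by
      refine (integrable_const ((2*M)^(2*k))).mono' hG2m.aestronglyMeasurable ?_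
      filter_upwards with q
      rw [Real.norm_eq_abs]; exact hG2b q
    have step1 : ∫ ω, (A ω) ^ (2*k) ∂P = ∫ q, G2 q ∂(P.map (fun ω => (T ω, U ω))) := by
      rw [integral_map (hTm.prodMk hUm).aemeasurable hG2m.aestronglyMeasurable]
    have step3 : ∫ q, G2 q ∂((P.map T).compProd (piKernel κ N))
        = ∫ x, ∫ y, G2 (x, y) ∂(piKernel κ N x) ∂(P.map T) :=
      MeasureTheory.Measure.integral_compProd hG2int
    have step4 : ∀ x : Fin N → E₁,
        ∫ y, G2 (x, y) ∂(piKernel κ N x) ≤ ((2*(k:ℝ)*M)/Real.sqrt N) ^ (2*k) := by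
      intro x
      rw [piKernel_apply]
      have hmz := mz_bound (N := N) (k := k) hk (fun n => κ (x n))
        (fun n u => φ (x n, u) - ψ (x n))
        (fun n => (hφ.comp (measurable_const.prodMk measurable_id)).sub measurable_const)
        (2*M) (by linarith)
        (fun n u => (abs_sub _ _).trans (by linarith [hM (x n, u), hψb (x n)]))
        (fun n => by
          rw [integral_sub (hφint (x n)) (integrable_const _), integral_const]
          simp [hψdef])
      have hre : ∫ y, G2 (x, y) ∂(Measure.pi fun n => κ (x n))
          = (N:ℝ)⁻¹^(2*k) * ∫ y, (∑ n : Fin N, (φ (x n, y n) - ψ (x n))) ^ (2*k)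
              ∂(Measure.pi fun n => κ (x n)) := by
        rw [← MeasureTheory.integral_const_mul]
        refine integral_congr_ae (Filter.Eventually.of_forall fun y => ?_)
        show ((N:ℝ)⁻¹ * ∑ n : Fin N, (φ (x n, y n) - ψ (x n))) ^ (2*k)
          = (N:ℝ)⁻¹^(2*k) * (∑ n : Fin N, (φ (x n, y n) - ψ (x n))) ^ (2*k)
        rw [mul_pow]
      rw [hre]
      have harith : (N:ℝ)⁻¹^(2*k) * ((k:ℝ)^(2*k) * (N:ℝ)^k * (2*M)^(2*k))
          = ((2*(k:ℝ)*M)/Real.sqrt N) ^ (2*k) := by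
        have hsq : Real.sqrt N ^ (2*k) = (N:ℝ)^k := by
          rw [pow_mul, Real.sq_sqrt hNR.le]
        rw [div_pow, hsq]
        have hN0 : (N:ℝ) ≠ 0 := hNR.ne'
        have h2 : (N:ℝ)⁻¹^(2*k) * (N:ℝ)^k * (N:ℝ)^k = 1 := by
          rw [mul_assoc, ← pow_add, ← two_mul, ← mul_pow, inv_mul_cancel₀ hN0, one_pow]
        rw [eq_div_iff (pow_ne_zero _ hN0)]
        linear_combination ((k:ℝ)^(2*k) * (2*M)^(2*k)) * h2
      calc (N:ℝ)⁻¹^(2*k) * ∫ y, (∑ n : Fin N, (φ (x n, y n) - ψ (x n))) ^ (2*k)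
              ∂(Measure.pi fun n => κ (x n))
          ≤ (N:ℝ)⁻¹^(2*k) * ((k:ℝ)^(2*k) * (N:ℝ)^k * (2*M)^(2*k)) :=
            mul_le_mul_of_nonneg_left hmz (pow_nonneg (inv_nonneg.2 hNR.le) _)
        _ = ((2*(k:ℝ)*M)/Real.sqrt N) ^ (2*k) := harith
    calc ∫ ω, (A ω) ^ (2*k) ∂P
        = ∫ q, G2 q ∂((P.map T).compProd (piKernel κ N)) := by rw [step1, hlaw]
      _ = ∫ x, ∫ y, G2 (x, y) ∂(piKernel κ N x) ∂(P.map T) := step3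
      _ ≤ ∫ _x, ((2*(k:ℝ)*M)/Real.sqrt N) ^ (2*k) ∂(P.map T) := by
          refine integral_mono_of_nonneg ?_ (integrable_const _)
            (Filter.Eventually.of_forall step4)
          filter_upwards with x
          exact integral_nonneg fun y => (even_two_mul k).pow_nonneg _
      _ = ((2*(k:ℝ)*M)/Real.sqrt N) ^ (2*k) := by simp
  -- assemble the Lp estimates
  have hBest : (eLpNorm B ep P).toReal ≤ C * M / Real.sqrt N := by
    rw [hepdef, rpow_helper P B hp (by rw [← hepdef]; exact hBep)]
    exact hLp N hN ψ hψm M hψb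
  have hc0 : 0 ≤ (2*(k:ℝ)*M)/Real.sqrt N :=
    div_nonneg (by positivity) (Real.sqrt_nonneg _)
  have hAest : (eLpNorm A eq2 P).toReal ≤ 2*(k:ℝ)*M / Real.sqrt N := by
    rw [heq2def, rpow_helper P A hq1 (by rw [← heq2def]; exact hA2k)]
    have hq2pos : (0:ℝ) < ((2*k : ℕ) : ℝ) := lt_of_lt_of_le one_pos hq1
    have hint_eq : ∫ ω, |A ω| ^ (((2*k : ℕ):ℝ)) ∂P = ∫ ω, (A ω) ^ (2*k) ∂P := by
      refine integral_congr_ae (Filter.Eventually.of_forall fun ω => ?_)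
      show |A ω| ^ (((2*k : ℕ) : ℝ)) = A ω ^ (2*k)
      rw [Real.rpow_natCast, (even_two_mul k).pow_abs]
    rw [hint_eq]
    calc (∫ ω, (A ω) ^ (2*k) ∂P) ^ (1/((2*k : ℕ):ℝ))
        ≤ (((2*(k:ℝ)*M)/Real.sqrt N) ^ (2*k)) ^ (1/((2*k : ℕ):ℝ)) := by
          refine Real.rpow_le_rpow ?_ hkey (by positivity)
          exact integral_nonneg fun ω => (even_two_mul k).pow_nonneg _
      _ = 2*(k:ℝ)*M / Real.sqrt N := by
          rw [← Real.rpow_natCast ((2*(k:ℝ)*M)/Real.sqrt N) (2*k),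
            ← Real.rpow_mul hc0, mul_one_div, div_self hq2pos.ne', Real.rpow_one]
  -- final chain
  have hgoal_eq : (∫ ω, |(N : ℝ)⁻¹ * (∑ n : Fin N, φ (X N n ω, Y N n ω))
      - ∫ z, φ z ∂(πm.compProd κ)| ^ p ∂P) ^ (1 / p)
      = (eLpNorm (fun ω => A ω + B ω) ep P).toReal := by
    rw [hepdef, rpow_helper P _ hp (by rw [← hepdef]; exact hABep)]
    congr 1
    refine integral_congr_ae (Filter.Eventually.of_forall fun ω => ?_)
    show |(N : ℝ)⁻¹ * (∑ n : Fin N, φ (X N n ω, Y N n ω))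
        - ∫ z, φ z ∂(πm.compProd κ)| ^ p = |A ω + B ω| ^ p
    rw [hAB ω]
  rw [hgoal_eq]
  have htri : eLpNorm (fun ω => A ω + B ω) ep P ≤ eLpNorm A ep P + eLpNorm B ep P :=
    eLpNorm_add_le hAm.aestronglyMeasurable hBm.aestronglyMeasurable hep1
  have hfinA : eLpNorm A ep P ≠ ⊤ := hAep.eLpNorm_ne_top
  have hfinB : eLpNorm B ep P ≠ ⊤ := hBep.eLpNorm_ne_top
  have hfinA2 : eLpNorm A eq2 P ≠ ⊤ := hA2k.eLpNorm_ne_top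
  calc (eLpNorm (fun ω => A ω + B ω) ep P).toReal
      ≤ (eLpNorm A ep P + eLpNorm B ep P).toReal :=
        ENNReal.toReal_mono (by
          rw [ENNReal.add_ne_top]; exact ⟨hfinA, hfinB⟩) htri
    _ = (eLpNorm A ep P).toReal + (eLpNorm B ep P).toReal := ENNReal.toReal_add hfinA hfinB
    _ ≤ (eLpNorm A eq2 P).toReal + (C * M / Real.sqrt N) :=
        add_le_add (ENNReal.toReal_mono hfinA2
          (eLpNorm_le_eLpNorm_of_exponent_le hepq hAm.aestronglyMeasurable)) hBest
    _ ≤ 2*(k:ℝ)*M / Real.sqrt N + C * M / Real.sqrt N := by linarith [hAest]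
    _ = (C + 2*(k:ℝ)) * M / Real.sqrt N := by ring
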